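/- Closed form of the composed 2-down/β-up transform: let β ≠ 2 and let f be a probability density function on (0, x_f) ⊆ (0, ∞), and suppose u(x) = ∫_x^{x_f} |(β−2)t|^{1/(β−2)} f(t) dt is finite; let g = 𝔘_β[f] be the one-parameter up transform determined by u and g(u(x)) = |(β−2)x|^{1/(2−β)}. Define S(x) = (log x)/(2−β) and h(s) = |β−2| e^{(2−β)s} f( e^{(2−β)s} ) for s in the range of S, extended by 0. Then: (i) S'(x) = 1/((2−β)x) for all x ∈ (0, x_f); (ii) h(S(x)) · |S'(x)| = f(x) for all x ∈ (0, x_f), so that h is a probability density; and (iii) if f is differentiable, then h(S(x)) = g(u(x))² / |g'(u(x))| for all x ∈ (0, x_f), i.e., h is the 2-down transform of the β-up transform of f. -/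

import Mathlib

open MeasureTheory Set Filter Topology

noncomputable section

/-- The open interval with extended-real endpoints, viewed as a set of reals. -/
def intIoo (a b : EReal) : Set ℝ := {x : ℝ | a < (x : EReal) ∧ (x : EReal) < b}

/-- closed form of the composed `2`-down/`β`-up transform
`𝔇₂𝔘_β[f] = 𝔊̃_{2-β}[f]`. -/
theorem down_two_up_transform_closed_form
    (β : ℝ) (hβ : β ≠ 2)
    (xf : EReal) (hxf : (0 : EReal) < xf)
    (f g S h u : ℝ → ℝ)
    (hf_meas : Measurable f)
    (hf_nonneg : ∀ x, 0 ≤ f x)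
    (hf_supp : ∀ x ∉ intIoo 0 xf, f x = 0)
    (hf_int : (∫ x, f x) = 1)
    (hu_fin : ∀ x ∈ intIoo 0 xf,
      IntegrableOn (fun t => |(β - 2) * t| ^ ((1 : ℝ) / (β - 2)) * f t)
        (intIoo (x : EReal) xf))
    (hu : ∀ x ∈ intIoo 0 xf,
      u x = ∫ t in intIoo (x : EReal) xf, |(β - 2) * t| ^ ((1 : ℝ) / (β - 2)) * f t)
    (hg : ∀ x ∈ intIoo 0 xf, g (u x) = |(β - 2) * x| ^ ((1 : ℝ) / (2 - β)))
    (hS : ∀ x, S x = Real.log x / (2 - β))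
    (hh : ∀ s ∈ S '' intIoo 0 xf,
      h s = |β - 2| * Real.exp ((2 - β) * s) * f (Real.exp ((2 - β) * s)))
    (hh0 : ∀ s ∉ S '' intIoo 0 xf, h s = 0) :
    (∀ x ∈ intIoo 0 xf, HasDerivAt S (1 / ((2 - β) * x)) x)
    ∧ (∀ x ∈ intIoo 0 xf, h (S x) * |1 / ((2 - β) * x)| = f x)
    ∧ ((∀ s, 0 ≤ h s) ∧ (∫ s, h s) = 1)
    ∧ (∀ f' : ℝ → ℝ, (∀ x ∈ intIoo 0 xf, HasDerivAt f (f' x) x) →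
        ∀ g' : ℝ → ℝ, (∀ x ∈ intIoo 0 xf, HasDerivAt g (g' (u x)) (u x)) →
        ∀ x ∈ intIoo 0 xf, h (S x) = g (u x) ^ 2 / |g' (u x)|) := by
  have h2β : (2 : ℝ) - β ≠ 0 := sub_ne_zero.mpr (Ne.symm hβ)
  have hβ2 : β - 2 ≠ 0 := sub_ne_zero.mpr hβ
  have hA : (0 : ℝ) < |β - 2| := abs_pos.mpr hβ2
  have hopenGen : ∀ a b : EReal, IsOpen (intIoo a b) := fun a b =>
    isOpen_Ioo.preimage continuous_coe_real_ereal
  have hopen : IsOpen (intIoo 0 xf) := hopenGen 0 xf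
  have hmemI : ∀ {x : ℝ}, x ∈ intIoo 0 xf → 0 < x := by
    intro x hx
    have := hx.1
    exact_mod_cast this
  -- Part (i)
  have partI : ∀ x ∈ intIoo 0 xf, HasDerivAt S (1 / ((2 - β) * x)) x := by
    intro x hx
    have hx0 : 0 < x := hmemI hx
    have hSfun : S = fun y => Real.log y / (2 - β) := funext hS
    rw [hSfun]
    have := (Real.hasDerivAt_log hx0.ne').div_const (2 - β)
    exact this.congr_deriv (by rw [one_div, mul_inv, div_eq_mul_inv, mul_comm])
  -- key simplification of h ∘ S on the interval
  have hmulcancel : ∀ x : ℝ, (2 - β) * (Real.log x / (2 - β)) = Real.log x := by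
    intro x; field_simp
  have hhS : ∀ x ∈ intIoo 0 xf, h (S x) = |β - 2| * x * f x := by
    intro x hx
    have hx0 : 0 < x := hmemI hx
    rw [hh _ (Set.mem_image_of_mem _ hx), hS, hmulcancel, Real.exp_log hx0]
  -- Part (ii)
  have partII : ∀ x ∈ intIoo 0 xf, h (S x) * |1 / ((2 - β) * x)| = f x := by
    intro x hx
    have hx0 : 0 < x := hmemI hx
    rw [hhS x hx, abs_div, abs_one, abs_mul, abs_of_pos hx0, abs_sub_comm]
    field_simp
  -- Part (iii)
  have hpos : ∀ s, 0 ≤ h s := by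
    intro s
    by_cases hs : s ∈ S '' intIoo 0 xf
    · rw [hh s hs]
      exact mul_nonneg (mul_nonneg (abs_nonneg _) (Real.exp_pos _).le) (hf_nonneg _)
    · rw [hh0 s hs]
  have hSim : S '' intIoo 0 xf = (fun s => Real.exp ((2 - β) * s)) ⁻¹' intIoo 0 xf := by
    ext s
    constructor
    · rintro ⟨x, hx, rfl⟩
      have hx0 := hmemI hx
      have hx' : Real.exp ((2 - β) * S x) = x := by
        rw [hS, hmulcancel, Real.exp_log hx0]
      simpa [Set.mem_preimage, hx'] using hx
    · intro hs
      refine ⟨Real.exp ((2 - β) * s), hs, ?_⟩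
      rw [hS, Real.log_exp]
      field_simp
  have hinj : Set.InjOn S (intIoo 0 xf) := by
    intro a ha b hb hab
    have ha0 := hmemI ha; have hb0 := hmemI hb
    have hlog : Real.log a = Real.log b := by
      rw [hS, hS] at hab
      field_simp at hab
      exact hab
    calc a = Real.exp (Real.log a) := (Real.exp_log ha0).symm
    _ = Real.exp (Real.log b) := by rw [hlog]
    _ = b := Real.exp_log hb0
  have hchg := integral_image_eq_integral_abs_deriv_smul hopen.measurableSet
    (fun x hx => (partI x hx).hasDerivWithinAt) hinj h
  have hint : (∫ s, h s) = 1 := by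
    have h1 : (∫ s, h s) = ∫ s in S '' intIoo 0 xf, h s :=
      (setIntegral_eq_integral_of_forall_compl_eq_zero hh0).symm
    have h2 : (∫ x in intIoo 0 xf, f x) = 1 := by
      rw [setIntegral_eq_integral_of_forall_compl_eq_zero hf_supp]; exact hf_int
    have h3 : (∫ x in intIoo 0 xf, |1 / ((2 - β) * x)| • h (S x))
        = ∫ x in intIoo 0 xf, f x := by
      apply setIntegral_congr_fun hopen.measurableSet
      intro x hx
      show |1 / ((2 - β) * x)| • h (S x) = f x
      rw [smul_eq_mul, mul_comm]
      exact partII x hx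
    rw [h1, hchg, h3, h2]
  refine ⟨partI, partII, ⟨hpos, hint⟩, ?_⟩
  -- Part (iv)
  intro f' hf' g' hg' x0 hx0I
  have hx0 : 0 < x0 := hmemI hx0I
  set r : ℝ := 1 / (2 - β) with hr_def
  have hr0 : r ≠ 0 := one_div_ne_zero h2β
  set F : ℝ → ℝ := fun t => |(β - 2) * t| ^ ((1 : ℝ) / (β - 2)) * f t with hF_def
  have hFmeas : Measurable F := by
    apply Measurable.mul _ hf_meas
    fun_prop
  -- u a - u b = ∫ t in a..b, F t
  have hkey : ∀ a b : ℝ, a ∈ intIoo 0 xf → b ∈ intIoo 0 xf → a ≤ b →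
      u a - u b = ∫ t in a..b, F t := by
    intro a b ha hb hab
    have hsub : Set.Ioc a b ⊆ intIoo (a : EReal) xf := by
      intro t ht
      refine ⟨by exact_mod_cast ht.1, lt_of_le_of_lt ?_ hb.2⟩
      exact_mod_cast ht.2
    have hIab : IntegrableOn F (Set.Ioc a b) := (hu_fin a ha).mono_set hsub
    have hIb : IntegrableOn F (intIoo (b : EReal) xf) := hu_fin b hb
    have hdisj : Disjoint (Set.Ioc a b) (intIoo (b : EReal) xf) := by
      rw [Set.disjoint_left]
      rintro t ⟨_, h2⟩ ⟨h3, _⟩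
      have : b < t := by exact_mod_cast h3
      exact absurd this (not_lt.mpr h2)
    have hdecomp : intIoo (a : EReal) xf = Set.Ioc a b ∪ intIoo (b : EReal) xf := by
      ext t
      simp only [intIoo, Set.mem_setOf_eq, Set.mem_union, Set.mem_Ioc]
      constructor
      · rintro ⟨h1, h2⟩
        rcases le_or_gt t b with h3 | h3
        · exact Or.inl ⟨by exact_mod_cast h1, h3⟩
        · exact Or.inr ⟨by exact_mod_cast h3, h2⟩
      · rintro (⟨h1, h2⟩ | ⟨h1, h2⟩)
        · refine ⟨by exact_mod_cast h1, lt_of_le_of_lt ?_ hb.2⟩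
          exact_mod_cast h2
        · refine ⟨lt_of_le_of_lt ?_ h1, h2⟩
          exact_mod_cast hab
    rw [hu a ha, hu b hb, hdecomp,
      setIntegral_union hdisj (hopenGen _ _).measurableSet hIab hIb,
      intervalIntegral.integral_of_le hab]
    ring
  have huev : ∀ᶠ x in 𝓝 x0, u x = u x0 - ∫ t in x0..x, F t := by
    filter_upwards [hopen.mem_nhds hx0I] with x hx
    rcases le_total x0 x with hle | hle
    · have := hkey x0 x hx0I hx hle; linarith
    · have h1 := hkey x x0 hx hx0I hle
      have h2 : (∫ t in x0..x, F t) = -∫ t in x..x0, F t :=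
        intervalIntegral.integral_symm x x0
      linarith
  have hfc : ContinuousAt f x0 := (hf' x0 hx0I).continuousAt
  have hFc : ContinuousAt F x0 := by
    apply ContinuousAt.mul _ hfc
    have hbne : |(β - 2) * x0| ≠ 0 := abs_ne_zero.mpr (mul_ne_zero hβ2 hx0.ne')
    have hbc : ContinuousAt (fun t : ℝ => |(β - 2) * t|) x0 := by fun_prop
    exact hbc.rpow_const (Or.inl hbne)
  have hFsm : StronglyMeasurableAtFilter F (𝓝 x0) :=
    ⟨Set.univ, Filter.univ_mem, hFmeas.aestronglyMeasurable.restrict⟩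
  have hGd : HasDerivAt (fun x => ∫ t in x0..x, F t) (F x0) x0 :=
    intervalIntegral.integral_hasDerivAt_right IntervalIntegrable.refl hFsm hFc
  have hud : HasDerivAt u (-(F x0)) x0 :=
    ((hGd.const_sub (u x0))).congr_of_eventuallyEq huev
  set c : ℝ := |β - 2| * x0 with hc_def
  have hcpos : 0 < c := mul_pos hA hx0
  have hψ : HasDerivAt (fun x : ℝ => (|β - 2| * x) ^ r) (r * c ^ (r - 1) * |β - 2|) x0 := by
    have h1 : HasDerivAt (fun y : ℝ => y ^ r) (r * c ^ (r - 1)) c :=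
      Real.hasDerivAt_rpow_const (Or.inl hcpos.ne')
    have h2 : HasDerivAt (fun x : ℝ => |β - 2| * x) |β - 2| x0 := by
      simpa using (hasDerivAt_id x0).const_mul |β - 2|
    exact h1.comp x0 h2
  have hφev : (fun x => g (u x)) =ᶠ[𝓝 x0] (fun x : ℝ => (|β - 2| * x) ^ r) := by
    filter_upwards [hopen.mem_nhds hx0I] with x hx
    rw [hg x hx, abs_mul, abs_of_pos (hmemI hx)]
  have hgu : HasDerivAt (fun x => g (u x)) (g' (u x0) * -(F x0)) x0 :=
    (hg' x0 hx0I).comp x0 hud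
  have hgu2 : HasDerivAt (fun x : ℝ => (|β - 2| * x) ^ r) (g' (u x0) * -(F x0)) x0 :=
    hgu.congr_of_eventuallyEq hφev.symm
  have hEq : g' (u x0) * -(F x0) = r * c ^ (r - 1) * |β - 2| := hgu2.unique hψ
  have hcr1 : (0 : ℝ) < c ^ (r - 1) := Real.rpow_pos_of_pos hcpos _
  have hD : r * c ^ (r - 1) * |β - 2| ≠ 0 :=
    mul_ne_zero (mul_ne_zero hr0 hcr1.ne') hA.ne'
  have hF0 : F x0 ≠ 0 := by
    intro h0
    apply hD
    rw [← hEq, h0]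
    ring
  have hexp : (1 : ℝ) / (β - 2) = -r := by
    rw [hr_def, ← div_neg, neg_sub]
  have hFx0 : F x0 = c ^ (-r) * f x0 := by
    rw [hF_def]
    simp only
    rw [hexp, abs_mul, abs_of_pos hx0]
  have hFnn : 0 ≤ F x0 := by
    rw [hFx0]
    exact mul_nonneg (Real.rpow_pos_of_pos hcpos _).le (hf_nonneg _)
  have hFpos : 0 < F x0 := lt_of_le_of_ne hFnn (Ne.symm hF0)
  have hg'val : g' (u x0) = -(r * c ^ (r - 1) * |β - 2|) / F x0 := by
    rw [eq_div_iff hF0]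
    linear_combination -hEq
  have habsr : |r| = 1 / |β - 2| := by
    rw [hr_def, abs_div, abs_one, abs_sub_comm]
  have habs : |g' (u x0)| = c ^ (r - 1) / F x0 := by
    rw [hg'val, abs_div, abs_neg, abs_of_pos hFpos, abs_mul, abs_mul,
      abs_of_pos hcr1, habsr, abs_abs]
    congr 1
    field_simp
  have hgc : g (u x0) = c ^ r := by
    rw [hg x0 hx0I, abs_mul, abs_of_pos hx0]
  rw [hhS x0 hx0I, hgc, habs, hFx0, ← hc_def]
  rw [div_div_eq_mul_div, eq_div_iff hcr1.ne']
  have e1 : c * c ^ (r - 1) = c ^ r := by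
    nth_rewrite 1 [← Real.rpow_one c]
    rw [← Real.rpow_add hcpos]
    norm_num
  have e2 : c ^ r * c ^ r * c ^ (-r) = c ^ r := by
    rw [← Real.rpow_add hcpos, ← Real.rpow_add hcpos]
    congr 1
    ring
  calc c * f x0 * c ^ (r - 1) = (c * c ^ (r - 1)) * f x0 := by ring
  _ = c ^ r * f x0 := by rw [e1]
  _ = (c ^ r * c ^ r * c ^ (-r)) * f x0 := by rw [e2]
  _ = (c ^ r) ^ 2 * (c ^ (-r) * f x0) := by ring
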